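/- Let P(s) := P^b · (s·Hᵀ R⁻¹ H P^b + I)⁻¹ and let x̂^b ∈ ℝᴺ and y ∈ ℝᴸ. Define x̂(s) := x̂^b − s·P(s)·Hᵀ R⁻¹ (H x̂^b − y). Then x̂ is differentiable, satisfies the Kalman–Bucy mean equation dx̂/ds = − P(s) Hᵀ R⁻¹ (H x̂(s) − y) with initial condition x̂(0) = x̂^b, and at s = 1 satisfies x̂(1) = x̂^b − P(1) Hᵀ R⁻¹ (H x̂^b − y), the discrete Kalman filter analysis mean. -/

import Mathlib

open Matrix

section Stmt5Aux

lemma stmt5_smul_psd {n : ℕ} {B : Matrix (Fin n) (Fin n) ℝ} (hB : B.PosSemidef) {s : ℝ}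
    (hs : 0 ≤ s) : (s • B).PosSemidef := by
  rw [Matrix.posSemidef_iff_dotProduct_mulVec]
  constructor
  · show _ = _
    rw [conjTranspose_smul, hB.1.eq]
    simp
  · intro x
    rw [smul_mulVec, dotProduct_smul, smul_eq_mul]
    exact mul_nonneg hs (hB.dotProduct_mulVec_nonneg x)

open scoped MatrixOrder in
lemma stmt5_sqrt {n : ℕ} {Pb : Matrix (Fin n) (Fin n) ℝ} (hPb : Pb.PosSemidef) :
    ∃ S : Matrix (Fin n) (Fin n) ℝ, S * S = Pb ∧ Sᴴ = S :=
  ⟨CFC.sqrt Pb, CFC.sqrt_mul_sqrt_self Pb hPb.nonneg, (CFC.sqrt_nonneg Pb).posSemidef.1⟩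

end Stmt5Aux

/-- With `P(s) := P^b (s·Hᵀ R⁻¹ H P^b + I)⁻¹` and
`x̂(s) := x̂^b − s·P(s)·Hᵀ R⁻¹ (H x̂^b − y)`, the function `x̂` is differentiable, satisfies
the Kalman–Bucy mean equation `dx̂/ds = − P(s) Hᵀ R⁻¹ (H x̂(s) − y)` on `[0,∞)` with
`x̂(0) = x̂^b`, and `x̂(1) = x̂^b − P(1) Hᵀ R⁻¹ (H x̂^b − y)` is the discrete Kalman filter
analysis mean. -/
theorem stmt_5 {N L : ℕ}
    (Pb : Matrix (Fin N) (Fin N) ℝ) (H : Matrix (Fin L) (Fin N) ℝ)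
    (R : Matrix (Fin L) (Fin L) ℝ)
    (hPb : Pb.PosSemidef) (hR : R.PosDef)
    (xb : Fin N → ℝ) (y : Fin L → ℝ)
    (P : ℝ → Matrix (Fin N) (Fin N) ℝ)
    (hP : ∀ s : ℝ, P s = Pb * (s • (Hᵀ * R⁻¹ * H * Pb) + 1)⁻¹)
    (xhat : ℝ → Fin N → ℝ)
    (hxhat : ∀ s : ℝ, xhat s = xb - s • ((P s * Hᵀ * R⁻¹) *ᵥ (H *ᵥ xb - y))) :
    (∀ s ∈ Set.Ici (0:ℝ),
      HasDerivWithinAt xhat (-((P s * Hᵀ * R⁻¹) *ᵥ (H *ᵥ xhat s - y))) (Set.Ici 0) s) ∧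
    xhat 0 = xb ∧
    xhat 1 = xb - (P 1 * Hᵀ * R⁻¹) *ᵥ (H *ᵥ xb - y) := by
  set B : Matrix (Fin N) (Fin N) ℝ := Hᵀ * R⁻¹ * H with hBdef
  set A : Matrix (Fin N) (Fin N) ℝ := Hᵀ * R⁻¹ * H * Pb with hAdef
  set M : ℝ → Matrix (Fin N) (Fin N) ℝ := fun s => s • A + 1 with hMdef
  have hMs : ∀ s : ℝ, M s = s • A + 1 := fun s => rfl
  -- positive semidefiniteness of B
  have hB : B.PosSemidef := by
    have h := hR.inv.posSemidef.conjTranspose_mul_mul_same (B := H)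
    rw [conjTranspose_eq_transpose_of_trivial] at h
    exact h
  -- invertibility of M s for s ≥ 0
  have hdet : ∀ s : ℝ, 0 ≤ s → IsUnit (M s).det := by
    intro s hs
    obtain ⟨S, hSS, hSH⟩ := stmt5_sqrt hPb
    have h1 : M s = ((s • B) * S) * S + 1 := by
      rw [hMs, hAdef, ← hSS]
      rw [Matrix.smul_mul, Matrix.smul_mul, hBdef]
      rw [mul_assoc]
    have h2 : (M s).det = (S * ((s • B) * S) + 1).det := by
      rw [h1, det_mul_add_one_comm]
    have hpsd : (S * ((s • B) * S)).PosSemidef := by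
      have h3 := (stmt5_smul_psd hB hs).conjTranspose_mul_mul_same (B := S)
      rw [hSH] at h3
      rw [← mul_assoc]
      exact h3
    have hposdef : (S * ((s • B) * S) + 1).PosDef :=
      Matrix.PosDef.posSemidef_add hpsd Matrix.PosDef.one
    rw [h2]
    exact hposdef.det_pos.ne'.isUnit
  -- continuity of s ↦ (M s)⁻¹ on the relevant set
  have hMcont : Continuous M := (continuous_id.smul continuous_const).add continuous_const
  have hinv_eq : (fun s : ℝ => (M s)⁻¹) = fun s => ((M s).det)⁻¹ • (M s).adjugate := by
    funext s; rw [Matrix.inv_def, Ring.inverse_eq_inv']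
  have hcont : ∀ t : ℝ, 0 ≤ t → ContinuousAt (fun s => (M s)⁻¹) t := by
    intro t ht
    rw [hinv_eq]
    exact ((hMcont.matrix_det.continuousAt.inv₀ (hdet t ht).ne_zero)).smul
      hMcont.matrix_adjugate.continuousAt
  -- key algebraic identity
  have hkey : ∀ s t : ℝ, 0 ≤ s → 0 ≤ t →
      s • (M s)⁻¹ - t • (M t)⁻¹ = (s - t) • ((M s)⁻¹ * (M t)⁻¹) := by
    intro s t hs ht
    have h0 : s • (M t) - t • (M s) = (s - t) • (1 : Matrix (Fin N) (Fin N) ℝ) := by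
      rw [hMs, hMs]
      module
    have e1 : (M s)⁻¹ * (s • (M t) - t • (M s)) * (M t)⁻¹
        = (s - t) • ((M s)⁻¹ * (M t)⁻¹) := by
      rw [h0, Matrix.mul_smul, Matrix.mul_one, Matrix.smul_mul]
    have e2 : (M s)⁻¹ * (s • (M t) - t • (M s)) * (M t)⁻¹
        = s • (M s)⁻¹ - t • (M t)⁻¹ := by
      rw [Matrix.mul_sub, Matrix.sub_mul, Matrix.mul_smul, Matrix.mul_smul,
        Matrix.smul_mul, Matrix.smul_mul, mul_assoc, Matrix.mul_nonsing_inv _ (hdet t ht),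
        Matrix.nonsing_inv_mul _ (hdet s hs), Matrix.mul_one, Matrix.one_mul]
    rw [← e2, e1]
  -- data vectors
  set d : Fin L → ℝ := H *ᵥ xb - y with hddef
  set v : Fin N → ℝ := (Hᵀ * R⁻¹) *ᵥ d with hvdef
  -- rewrite xhat
  have hx' : ∀ s : ℝ, xhat s = xb - Pb *ᵥ ((s • (M s)⁻¹) *ᵥ v) := by
    intro s
    rw [hxhat, hP, hvdef, mulVec_mulVec, mulVec_mulVec, ← smul_mulVec]
    congr 1
    simp only [hMs, Matrix.mul_smul, Matrix.smul_mul, Matrix.mul_assoc]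
  have hxfun : xhat = fun s => xb - Pb *ᵥ ((s • (M s)⁻¹) *ᵥ v) := funext hx'
  refine ⟨?_, ?_, ?_⟩
  · -- the derivative claim
    intro t ht
    have ht0 : (0:ℝ) ≤ t := ht
    set Q : Matrix (Fin N) (Fin N) ℝ := (M t)⁻¹ with hQdef
    set w : Fin N → ℝ := (Q * Q) *ᵥ v with hwdef
    -- derivative of u s := (s • (M s)⁻¹) *ᵥ v
    have hu : HasDerivWithinAt (fun s => (s • (M s)⁻¹) *ᵥ v) w (Set.Ici 0) t := by
      rw [hasDerivWithinAt_iff_tendsto_slope]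
      have hgc : Filter.Tendsto (fun s => ((M s)⁻¹ * Q) *ᵥ v)
          (nhdsWithin t (Set.Ici 0 \ {t})) (nhds w) := by
        have hg : Continuous (fun X : Matrix (Fin N) (Fin N) ℝ => (X * Q) *ᵥ v) :=
          (continuous_id.matrix_mul continuous_const).matrix_mulVec continuous_const
        have h1 : ContinuousAt (fun s => ((M s)⁻¹ * Q) *ᵥ v) t :=
          hg.continuousAt.comp (hcont t ht0)
        have h2 := h1.continuousWithinAt (s := Set.Ici 0 \ {t})
        simpa [hwdef, hQdef] using h2.tendsto
      refine hgc.congr' ?_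
      filter_upwards [self_mem_nhdsWithin] with s hs
      have hs0 : (0:ℝ) ≤ s := hs.1
      have hst : s - t ≠ 0 := sub_ne_zero.2 hs.2
      rw [slope_def_module]
      rw [← Matrix.sub_mulVec, hkey s t hs0 ht0, hQdef, smul_mulVec, smul_smul,
        inv_mul_cancel₀ hst, one_smul]
    -- derivative of xhat
    have hu2 : HasDerivWithinAt (fun s => Pb *ᵥ ((s • (M s)⁻¹) *ᵥ v)) (Pb *ᵥ w)
        (Set.Ici 0) t := by
      have h := ((Matrix.mulVecLin Pb).toContinuousLinearMap.hasFDerivAt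
        (x := (t • (M t)⁻¹) *ᵥ v)).comp_hasDerivWithinAt t hu
      exact h
    have hd : HasDerivWithinAt xhat (0 - Pb *ᵥ w) (Set.Ici 0) t := by
      rw [hxfun]
      exact (hasDerivWithinAt_const t _ xb).sub hu2
    -- identify the derivative
    have hQ1 : (1 : Matrix (Fin N) (Fin N) ℝ) - t • (A * Q) = Q := by
      have h2 : M t * Q = 1 := Matrix.mul_nonsing_inv _ (hdet t ht0)
      have h3 : ((M t) - t • A) * Q = Q := by
        rw [hMs]; simp
      calc (1 : Matrix (Fin N) (Fin N) ℝ) - t • (A * Q)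
          = M t * Q - (t • A) * Q := by rw [h2, Matrix.smul_mul]
        _ = ((M t) - t • A) * Q := by rw [Matrix.sub_mul]
        _ = Q := h3
    have hPt : P t = Pb * Q := by rw [hP, hQdef, hMs]
    have hmain : P t * Hᵀ * R⁻¹ - t • ((P t * Hᵀ * R⁻¹) * (H * (P t * Hᵀ * R⁻¹)))
        = Pb * (Q * Q) * (Hᵀ * R⁻¹) := by
      have hrw : (P t * Hᵀ * R⁻¹) * (H * (P t * Hᵀ * R⁻¹))
          = Pb * Q * ((A * Q) * (Hᵀ * R⁻¹)) := by
        rw [hPt, hAdef]; simp only [Matrix.mul_assoc]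
      have hfact : P t * Hᵀ * R⁻¹ - t • (Pb * Q * ((A * Q) * (Hᵀ * R⁻¹)))
          = Pb * Q * (((1 : Matrix (Fin N) (Fin N) ℝ) - t • (A * Q)) * (Hᵀ * R⁻¹)) := by
        rw [Matrix.sub_mul, Matrix.one_mul, Matrix.mul_sub, Matrix.smul_mul,
          Matrix.mul_smul, hPt]
        simp only [Matrix.mul_assoc]
      rw [hrw, hfact, hQ1]
      simp only [Matrix.mul_assoc]
    have hvec : (P t * Hᵀ * R⁻¹) *ᵥ (H *ᵥ xhat t - y) = Pb *ᵥ w := by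
      have hxt : H *ᵥ xhat t - y = d - t • ((H * (P t * Hᵀ * R⁻¹)) *ᵥ d) := by
        rw [hxhat, Matrix.mulVec_sub, Matrix.mulVec_smul, sub_right_comm, hddef,
          mulVec_mulVec]
      rw [hxt, Matrix.mulVec_sub, Matrix.mulVec_smul, mulVec_mulVec, hwdef, hvdef,
        mulVec_mulVec, mulVec_mulVec, ← hmain, Matrix.sub_mulVec, smul_mulVec]
    have : -((P t * Hᵀ * R⁻¹) *ᵥ (H *ᵥ xhat t - y)) = 0 - Pb *ᵥ w := by
      rw [hvec, zero_sub]
    rw [this]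
    exact hd
  · rw [hxhat]; simp
  · rw [hxhat]; simp
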